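/- Let F and G be two disjoint closed connected subsets of the plane. Then the set O(F,G) := O_F(G) ∩ O_G(F) — where O_A(B) denotes the connected component of the complement of B containing A — is the unique connected component of ℝ² ∖ (F ∪ G) whose closure meets both F and G. -/

import Mathlib

open Set

open Complex Metric

noncomputable section

-- telescoping product
lemma telescope (h : ℕ → ℂ) (hne : ∀ k, h k ≠ 0) (N : ℕ) :
    ∏ k ∈ Finset.range N, (h (k+1) / h k) = h N / h 0 := by
  induction N with
  | zero => simp [div_self (hne 0)]
  | succ n ih =>
    rw [Finset.prod_range_succ, ih]
    rw [div_mul_div_comm, mul_comm (h 0), mul_div_mul_left _ _ (hne n)]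

-- squeeze continuity for a function pinched between two continuous functions
lemma squeezeCont {E : Type*} [SeminormedAddCommGroup E] {u v w : ℂ → E} {x : ℂ}
    (hu : Continuous u) (hv : Continuous v)
    (hw : ∀ y, w y = u y ∨ w y = v y) (hx : u x = v x) (hwx : w x = u x) :
    ContinuousAt w x := by
  rw [ContinuousAt, tendsto_iff_norm_sub_tendsto_zero]
  have hb : ∀ y, ‖w y - w x‖ ≤ ‖u y - u x‖ + ‖v y - v x‖ := by
    intro y
    rcases hw y with h | h
    · rw [h, hwx]
      exact le_add_of_le_of_nonneg le_rfl (norm_nonneg _)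
    · rw [h, hwx, hx]
      exact le_add_of_nonneg_of_le (norm_nonneg _) le_rfl
  have h0 : Filter.Tendsto (fun y => ‖u y - u x‖ + ‖v y - v x‖) (nhds x) (nhds 0) := by
    have := ((hu.tendsto x).sub_const (u x)).norm.add ((hv.tendsto x).sub_const (v x)).norm
    simpa using this
  exact squeeze_zero (fun y => norm_nonneg _) hb h0

-- integer-valued continuous function on preconnected set is constant
lemma intValuedConst {s : Set ℂ} (hs : IsPreconnected s) {r : ℂ → ℝ}
    (hr : ContinuousOn r s) (hint : ∀ x ∈ s, ∃ k : ℤ, r x = k)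
    {x y : ℂ} (hx : x ∈ s) (hy : y ∈ s) : r x = r y := by
  have key : ∀ p q : ℂ, p ∈ s → q ∈ s → r p < r q → False := by
    intro p q hp hq hlt
    obtain ⟨kp, hkp⟩ := hint p hp
    obtain ⟨kq, hkq⟩ := hint q hq
    have hks : kp < kq := by exact_mod_cast hkp ▸ hkq ▸ hlt
    have hmem : (kp : ℝ) + 1/2 ∈ Icc (r p) (r q) := by
      constructor
      · rw [hkp]; linarith
      · rw [hkq]
        have : (kp : ℝ) + 1 ≤ kq := by exact_mod_cast hks
        linarith
    obtain ⟨z, hz, hzval⟩ := hs.intermediate_value hp hq hr hmem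
    obtain ⟨kz, hkz⟩ := hint z hz
    rw [hkz] at hzval
    have : (2*kz : ℝ) = 2*kp + 1 := by linarith
    have : (2*kz : ℤ) = 2*kp + 1 := by exact_mod_cast this
    omega
  rcases lt_trichotomy (r x) (r y) with h | h | h
  · exact absurd (key x y hx hy h) (by simp)
  · exact h
  · exact absurd (key y x hy hx h) (by simp)

set_option maxHeartbeats 1000000 in
-- local lift on closed balls
lemma localLift {f : ℂ → ℂ} (hf : Continuous f) (habs : ∀ x, ‖f x‖ = 1) (n : ℕ) :
    ∃ g : ℂ → ℝ, ContinuousOn g (closedBall 0 (n:ℝ)) ∧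
      (∀ x ∈ closedBall (0:ℂ) (n:ℝ), Complex.exp (g x * I) = f x) ∧ g 0 = Complex.arg (f 0) := by
  have fne : ∀ x, f x ≠ 0 := by
    intro x h
    simpa [h] using habs x
  obtain ⟨δ, hδ, hδ'⟩ := Metric.uniformContinuousOn_iff.mp
    ((isCompact_closedBall (0:ℂ) (n:ℝ)).uniformContinuousOn_of_continuous hf.continuousOn)
    1 one_pos
  obtain ⟨M, hM⟩ := exists_nat_gt ((n:ℝ)/δ)
  set N : ℕ := M + 1 with hNdef
  have hNpos : 0 < (N:ℝ) := by positivity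
  have hNδ : (n:ℝ)/N < δ := by
    rw [div_lt_iff₀ hNpos]
    have h1 : (n:ℝ)/δ < N := lt_of_lt_of_le hM (by exact_mod_cast Nat.le_succ M)
    calc (n:ℝ) = (n/δ)*δ := by field_simp
    _ < N*δ := by exact mul_lt_mul_of_pos_right h1 hδ
    _ = δ*N := mul_comm _ _
  set u : ℕ → ℂ → ℂ := fun k x => (((k:ℝ))/N) • x with hu
  have humem : ∀ x ∈ closedBall (0:ℂ) (n:ℝ), ∀ k ≤ N, u k x ∈ closedBall (0:ℂ) (n:ℝ) := by
    intro x hx k hk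
    rw [mem_closedBall_zero_iff] at hx ⊢
    rw [hu, norm_smul]
    have h1 : |((k:ℝ))/N| ≤ 1 := by
      rw [abs_div, _root_.abs_of_nonneg (by positivity : (0:ℝ) ≤ (k:ℝ)),
        _root_.abs_of_nonneg hNpos.le, div_le_one hNpos]
      exact_mod_cast hk
    calc |((k:ℝ))/N| * ‖x‖ ≤ 1 * ‖x‖ := mul_le_mul_of_nonneg_right h1 (norm_nonneg x)
    _ = ‖x‖ := one_mul _
    _ ≤ n := hx
  have hclose : ∀ x ∈ closedBall (0:ℂ) (n:ℝ), ∀ k, dist (u (k+1) x) (u k x) < δ := by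
    intro x hx k
    rw [mem_closedBall_zero_iff] at hx
    have hsub : (((k+1:ℕ)):ℝ)/N - ((k:ℕ):ℝ)/N = 1/N := by push_cast; ring
    rw [hu, dist_eq_norm, ← sub_smul, hsub, norm_smul, Real.norm_eq_abs,
      _root_.abs_of_nonneg (by positivity : (0:ℝ) ≤ 1/(N:ℝ))]
    calc 1/(N:ℝ) * ‖x‖ ≤ 1/N * n := by
            exact mul_le_mul_of_nonneg_left hx (by positivity)
    _ = (n:ℝ)/N := by ring
    _ < δ := hNδ
  have hratio : ∀ x ∈ closedBall (0:ℂ) (n:ℝ), ∀ k < N,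
      ‖f (u (k+1) x) / f (u k x) - 1‖ < 1 := by
    intro x hx k hk
    have h1 : dist (f (u (k+1) x)) (f (u k x)) < 1 :=
      hδ' _ (humem x hx (k+1) hk) _ (humem x hx k hk.le) (hclose x hx k)
    have h2 : f (u (k+1) x) / f (u k x) - 1 = (f (u (k+1) x) - f (u k x)) / f (u k x) := by
      exact div_sub_one (fne _)
    rw [h2, norm_div, habs, div_one]
    rwa [dist_eq] at h1
  have hslit : ∀ x ∈ closedBall (0:ℂ) (n:ℝ), ∀ k < N,
      f (u (k+1) x) / f (u k x) ∈ Complex.slitPlane := by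
    intro x hx k hk
    have h1 := hratio x hx k hk
    left
    have h2 : |(f (u (k+1) x) / f (u k x) - 1).re| < 1 :=
      lt_of_le_of_lt (Complex.abs_re_le_norm _) h1
    have h3 : (f (u (k+1) x) / f (u k x) - 1).re = (f (u (k+1) x) / f (u k x)).re - 1 := by
      simp
    rw [h3, abs_lt] at h2
    linarith [h2.1]
  refine ⟨fun x => Complex.arg (f 0) +
      ∑ k ∈ Finset.range N, Complex.arg (f (u (k+1) x) / f (u k x)), ?_, ?_, ?_⟩
  · apply ContinuousOn.add continuousOn_const
    apply continuousOn_finset_sum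
    intro k hk
    rw [Finset.mem_range] at hk
    intro x hx
    apply ContinuousAt.continuousWithinAt
    have hcont : ∀ j : ℕ, Continuous fun a : ℂ => f (u j a) := by
      intro j
      simp only [hu]
      exact hf.comp (continuous_const_smul _)
    have h1 : ContinuousAt (fun a : ℂ => f (u (k+1) a) / f (u k a)) x :=
      ((hcont (k+1)).continuousAt).div ((hcont k).continuousAt) (fne _)
    exact ContinuousAt.comp (g := Complex.arg) (Complex.continuousAt_arg (hslit x hx k hk)) h1
  · intro x hx
    have hexp1 : ∀ z : ℂ, ‖z‖ = 1 → Complex.exp (Complex.arg z * I) = z := by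
      intro z hz
      have := Complex.norm_mul_exp_arg_mul_I z
      rwa [hz, ofReal_one, one_mul] at this
    push_cast
    rw [add_mul, Complex.exp_add, Finset.sum_mul, Complex.exp_sum]
    have h1 : ∀ k ∈ Finset.range N,
        Complex.exp ((Complex.arg (f (u (k+1) x) / f (u k x)) : ℂ) * I)
          = f (u (k+1) x) / f (u k x) := by
      intro k _
      apply hexp1
      rw [norm_div, habs, habs]
      norm_num
    rw [Finset.prod_congr rfl h1, telescope (fun k => f (u k x)) (fun k => fne _) N]
    have hu0 : u 0 x = 0 := by simp [hu]
    have huN : u N x = x := by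
      simp only [hu]
      rw [div_self (ne_of_gt hNpos), one_smul]
    rw [hu0, huN, hexp1 _ (habs 0)]
    rw [mul_div_assoc']
    rw [mul_comm, mul_div_assoc, div_self (fne 0), mul_one]
  · have : ∀ k, u k 0 = 0 := by intro k; simp [hu]
    simp [this, div_self (fne 0)]

-- from exp equality to integer multiple of 2π
lemma exp_eq_exp_real {a b : ℝ} (h : Complex.exp (a * I) = Complex.exp (b * I)) :
    ∃ k : ℤ, a - b = 2 * Real.pi * k := by
  rw [Complex.exp_eq_exp_iff_exists_int] at h
  obtain ⟨k, hk⟩ := h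
  refine ⟨k, ?_⟩
  have h2 : ((a : ℂ) - b) * I = (k : ℂ) * (2 * Real.pi * I) := by
    rw [sub_mul]; linear_combination hk
  have h2' : ((a : ℂ) - b) * I = ((k : ℂ) * (2 * Real.pi)) * I := by
    linear_combination hk
  have h3 : ((a : ℂ) - b) = (k : ℂ) * (2 * Real.pi) :=
    mul_right_cancel₀ Complex.I_ne_zero h2'
  have h4 : a - b = (k : ℝ) * (2 * Real.pi) := by exact_mod_cast h3
  rw [h4]; ring

lemma liftUnique {s : Set ℂ} (hs : IsPreconnected s) {g₁ g₂ : ℂ → ℝ}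
    (h₁ : ContinuousOn g₁ s) (h₂ : ContinuousOn g₂ s)
    (he : ∀ x ∈ s, Complex.exp (g₁ x * I) = Complex.exp (g₂ x * I))
    {x₀ : ℂ} (hx₀ : x₀ ∈ s) (h0 : g₁ x₀ = g₂ x₀) : EqOn g₁ g₂ s := by
  set r : ℂ → ℝ := fun x => (g₁ x - g₂ x) / (2 * Real.pi) with hr
  have hrc : ContinuousOn r s := (h₁.sub h₂).div_const _
  have hri : ∀ x ∈ s, ∃ k : ℤ, r x = k := by
    intro x hx
    obtain ⟨k, hk⟩ := exp_eq_exp_real (he x hx)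
    refine ⟨k, ?_⟩
    rw [hr]
    simp only []
    rw [hk]
    field_simp
  intro y hy
  have := intValuedConst hs hrc hri hy hx₀
  rw [hr] at this
  simp only at this
  have hpi : (2 * Real.pi) ≠ 0 := by positivity
  rw [h0, sub_self, zero_div] at this
  rcases div_eq_zero_iff.mp this with h | h
  · linarith
  · exact absurd h hpi

lemma expLift {f : ℂ → ℂ} (hf : Continuous f) (habs : ∀ x, ‖f x‖ = 1) :
    ∃ g : ℂ → ℝ, Continuous g ∧ ∀ x, Complex.exp (g x * I) = f x := by
  choose gs hgs1 hgs2 hgs3 using localLift hf habs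
  have hagree : ∀ m n : ℕ, m ≤ n → EqOn (gs m) (gs n) (closedBall 0 (m:ℝ)) := by
    intro m n hmn
    have hsub : closedBall (0:ℂ) (m:ℝ) ⊆ closedBall 0 (n:ℝ) :=
      closedBall_subset_closedBall (by exact_mod_cast hmn)
    refine liftUnique (convex_closedBall (0:ℂ) (m:ℝ)).isPreconnected
      (hgs1 m) ((hgs1 n).mono hsub) ?_ (mem_closedBall_self (by positivity)) ?_
    · intro x hx
      rw [hgs2 m x hx, hgs2 n x (hsub hx)]
    · rw [hgs3 m, hgs3 n]
  have hmem : ∀ y : ℂ, y ∈ closedBall (0:ℂ) ((⌊‖y‖⌋₊ + 1 : ℕ) : ℝ) := by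
    intro y
    rw [mem_closedBall_zero_iff]
    push_cast
    exact (Nat.lt_floor_add_one ‖y‖).le
  refine ⟨fun x => gs (⌊‖x‖⌋₊ + 1) x, ?_, ?_⟩
  · rw [continuous_iff_continuousAt]
    intro x
    set n : ℕ := ⌊‖x‖⌋₊ + 2 with hn
    have hev : ∀ y ∈ ball x 1, gs (⌊‖y‖⌋₊ + 1) y = gs n y := by
      intro y hy
      apply hagree (⌊‖y‖⌋₊ + 1) n _ (hmem y)
      have h1 : ‖y‖ < ‖x‖ + 1 := by
        calc ‖y‖ = ‖x + (y - x)‖ := by ring_nf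
        _ ≤ ‖x‖ + ‖y - x‖ := norm_add_le _ _
        _ < ‖x‖ + 1 := by
            have := mem_ball_iff_norm.mp hy
            linarith
      have h2 : ⌊‖y‖⌋₊ ≤ ⌊‖x‖ + 1⌋₊ := Nat.floor_le_floor h1.le
      rw [Nat.floor_add_one (norm_nonneg x)] at h2
      omega
    have hx_in : x ∈ ball (0:ℂ) (n:ℝ) := by
      rw [mem_ball_zero_iff]
      calc ‖x‖ < ⌊‖x‖⌋₊ + 1 := Nat.lt_floor_add_one _
      _ ≤ (n:ℝ) := by rw [hn]; push_cast; linarith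
    have hcn : ContinuousAt (gs n) x :=
      (hgs1 n).continuousAt (Filter.mem_of_superset (isOpen_ball.mem_nhds hx_in)
        ball_subset_closedBall)
    apply hcn.congr
    apply Filter.eventuallyEq_of_mem (isOpen_ball.mem_nhds (mem_ball_self one_pos))
    intro y hy
    exact (hev y hy).symm
  · intro x
    exact hgs2 _ x (hmem x)

set_option maxHeartbeats 1000000 in
lemma unicoherence {U V : Set ℂ} (hUo : IsOpen U) (hVo : IsOpen V)
    (hU : IsPreconnected U) (hV : IsPreconnected V) (huniv : U ∪ V = univ) :
    IsPreconnected (U ∩ V) := by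
  classical
  by_cases hUu : U = univ
  · rw [hUu, univ_inter]; exact hV
  by_cases hVu : V = univ
  · rw [hVu, inter_univ]; exact hU
  rw [isPreconnected_iff_subset_of_disjoint]
  intro s t hso hto hcover hdisj
  by_contra hcon
  push_neg at hcon
  obtain ⟨hns, hnt⟩ := hcon
  -- the two pieces of the separation
  set A := U ∩ V ∩ s with hA
  set B := U ∩ V ∩ t with hB
  have hAopen : IsOpen A := (hUo.inter hVo).inter hso
  have hBopen : IsOpen B := (hUo.inter hVo).inter hto
  have hABcover : A ∪ B = U ∩ V := by
    rw [hA, hB, ← inter_union_distrib_left]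
    exact (inter_eq_left.mpr hcover)
  have hABdisj : A ∩ B = ∅ := by
    rw [hA, hB]
    rw [← subset_empty_iff, ← hdisj]
    intro z hz
    exact ⟨hz.1.1, hz.1.2, hz.2.2⟩
  have hAnon : A.Nonempty := by
    obtain ⟨z, hz1, hz2⟩ := not_subset.mp hnt
    rcases hcover hz1 with h | h
    · exact ⟨z, hz1, h⟩
    · exact absurd h hz2
  have hBnon : B.Nonempty := by
    obtain ⟨z, hz1, hz2⟩ := not_subset.mp hns
    rcases hcover hz1 with h | h
    · exact absurd h hz2
    · exact ⟨z, hz1, h⟩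
  -- the Urysohn-type function φ
  have hUc : (Uᶜ).Nonempty := nonempty_compl.mpr hUu
  have hVc : (Vᶜ).Nonempty := nonempty_compl.mpr hVu
  have hcompl_disj : Uᶜ ∩ Vᶜ = ∅ := by
    rw [← compl_union, huniv, compl_univ]
  set φ : ℂ → ℝ := fun x => infDist x Vᶜ / (infDist x Vᶜ + infDist x Uᶜ) with hφ
  have hden : ∀ x, 0 < infDist x Vᶜ + infDist x Uᶜ := by
    intro x
    have : x ∉ Uᶜ ∨ x ∉ Vᶜ := by
      by_contra h
      push_neg at h
      exact absurd (hcompl_disj ▸ mem_inter h.1 h.2) (notMem_empty x)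
    rcases this with h | h
    · have := (hUo.isClosed_compl.notMem_iff_infDist_pos hUc).mp h
      have h2 := infDist_nonneg (x := x) (s := Vᶜ)
      linarith
    · have := (hVo.isClosed_compl.notMem_iff_infDist_pos hVc).mp h
      have h2 := infDist_nonneg (x := x) (s := Uᶜ)
      linarith
  have hφc : Continuous φ := by
    apply (continuous_infDist_pt _).div ((continuous_infDist_pt _).add (continuous_infDist_pt _))
    exact fun x => ne_of_gt (hden x)
  have hφ0 : ∀ x ∈ Vᶜ, φ x = 0 := by
    intro x hx
    rw [hφ]
    simp only []
    rw [infDist_zero_of_mem hx, zero_div]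
  have hφ1 : ∀ x ∈ Uᶜ, φ x = 1 := by
    intro x hx
    rw [hφ]
    simp only []
    rw [infDist_zero_of_mem hx, add_zero, div_self]
    have hxV : x ∉ Vᶜ := by
      intro h
      exact absurd (hcompl_disj ▸ mem_inter hx h) (notMem_empty x)
    exact ne_of_gt ((hVo.isClosed_compl.notMem_iff_infDist_pos hVc).mp hxV)
  -- the piecewise circle-valued map
  set W : Set ℂ := Vᶜ ∪ A with hW
  set uf : ℂ → ℂ := fun x => Complex.exp ((Real.pi * φ x : ℝ) * I) with huf
  set vf : ℂ → ℂ := fun x => Complex.exp ((-(Real.pi * φ x) : ℝ) * I) with hvf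
  have hufc : Continuous uf := by
    apply Complex.continuous_exp.comp
    exact (Complex.continuous_ofReal.comp (continuous_const.mul hφc)).mul continuous_const
  have hvfc : Continuous vf := by
    apply Complex.continuous_exp.comp
    exact (Complex.continuous_ofReal.comp (continuous_const.mul hφc).neg).mul continuous_const
  set f : ℂ → ℂ := fun x => if x ∈ W then uf x else vf x with hf
  have hforuv : ∀ y, f y = uf y ∨ f y = vf y := by
    intro y
    simp only [hf]
    by_cases h : y ∈ W
    · left; rw [if_pos h]
    · right; rw [if_neg h]
  have habsf : ∀ x, ‖f x‖ = 1 := by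
    intro x
    rcases hforuv x with h | h <;> rw [h]
    · exact Complex.norm_exp_ofReal_mul_I _
    · exact Complex.norm_exp_ofReal_mul_I _
  have hBW : B ∩ W = ∅ := by
    rw [hW, inter_union_distrib_left]
    have h1 : B ∩ Vᶜ = ∅ := by
      rw [← subset_empty_iff]
      intro z hz
      exact absurd hz.1.1.2 hz.2
    rw [h1, inter_comm B A, hABdisj, union_empty]
  have hfc : Continuous f := by
    rw [continuous_iff_continuousAt]
    intro x
    by_cases hxA : x ∈ A
    · apply ContinuousAt.congr hufc.continuousAt
      apply Filter.eventuallyEq_of_mem (hAopen.mem_nhds hxA)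
      intro y hy
      simp only [hf]
      rw [if_pos (mem_union_right _ hy)]
    by_cases hxB : x ∈ B
    · apply ContinuousAt.congr hvfc.continuousAt
      apply Filter.eventuallyEq_of_mem (hBopen.mem_nhds hxB)
      intro y hy
      simp only [hf]
      rw [if_neg (fun h => absurd (hBW ▸ mem_inter hy h) (notMem_empty y))]
    -- x is outside U ∩ V
    have hxUV : x ∉ U ∩ V := by
      intro h
      rcases (hABcover ▸ h : x ∈ A ∪ B) with h' | h'
      exacts [hxA h', hxB h']
    have hxc : x ∈ Uᶜ ∪ Vᶜ := by
      rw [← compl_inter]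
      exact hxUV
    have heq : uf x = vf x := by
      rcases hxc with h | h
      · simp only [huf, hvf, hφ1 x h, mul_one]
        have h1 : ((-Real.pi : ℝ) : ℂ) * I = -(↑Real.pi * I) := by push_cast; ring
        rw [h1, Complex.exp_neg, Complex.exp_pi_mul_I]
        norm_num
      · simp only [huf, hvf, hφ0 x h, mul_zero]
        norm_num
    apply squeezeCont hufc hvfc hforuv heq
    rcases hforuv x with h | h
    · exact h
    · rw [h, heq]
  -- lift to a continuous real logarithm
  obtain ⟨g, hgc, hge⟩ := expLift hfc habsf
  set τ : ℂ → ℝ := fun x => g x / Real.pi with hτ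
  have hτc : Continuous τ := hgc.div_const _
  have hcong1 : ∀ x ∈ W, ∃ k : ℤ, τ x - φ x = 2 * k := by
    intro x hx
    have h1 : Complex.exp ((g x : ℝ) * I) = Complex.exp ((Real.pi * φ x : ℝ) * I) := by
      rw [hge x, hf]
      simp only []
      rw [if_pos hx, huf]
    obtain ⟨k, hk⟩ := exp_eq_exp_real h1
    refine ⟨k, ?_⟩
    rw [hτ]
    simp only []
    have hπ : Real.pi ≠ 0 := Real.pi_ne_zero
    field_simp
    linarith [hk]
  have hcong2 : ∀ x, x ∉ W → ∃ k : ℤ, τ x + φ x = 2 * k := by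
    intro x hx
    have h1 : Complex.exp ((g x : ℝ) * I) = Complex.exp ((-(Real.pi * φ x) : ℝ) * I) := by
      rw [hge x, hf]
      simp only []
      rw [if_neg hx, hvf]
    obtain ⟨k, hk⟩ := exp_eq_exp_real h1
    refine ⟨k, ?_⟩
    rw [hτ]
    simp only []
    have hπ : Real.pi ≠ 0 := Real.pi_ne_zero
    field_simp
    linarith [hk]
  -- the two integer-valued functions
  set c : ℂ → ℝ := fun x => if x ∈ W then (τ x - φ x)/2 else (τ x + φ x)/2 with hc
  set d : ℂ → ℝ := fun x => if x ∈ W then (τ x - φ x)/2 + 1 else (τ x + φ x)/2 with hd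
  have hcint : ∀ x, ∃ k : ℤ, c x = k := by
    intro x
    simp only [hc]
    by_cases h : x ∈ W
    · obtain ⟨k, hk⟩ := hcong1 x h
      exact ⟨k, by rw [if_pos h, hk]; push_cast; ring⟩
    · obtain ⟨k, hk⟩ := hcong2 x h
      exact ⟨k, by rw [if_neg h, hk]; push_cast; ring⟩
  have hdint : ∀ x, ∃ k : ℤ, d x = k := by
    intro x
    simp only [hd]
    by_cases h : x ∈ W
    · obtain ⟨k, hk⟩ := hcong1 x h
      exact ⟨k + 1, by rw [if_pos h, hk]; push_cast; ring⟩
    · obtain ⟨k, hk⟩ := hcong2 x h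
      exact ⟨k, by rw [if_neg h, hk]; push_cast; ring⟩
  set cu : ℂ → ℝ := fun x => (τ x - φ x)/2 with hcu
  set cv : ℂ → ℝ := fun x => (τ x + φ x)/2 with hcv
  have hcuc : Continuous cu := (hτc.sub hφc).div_const _
  have hcvc : Continuous cv := (hτc.add hφc).div_const _
  -- c is continuous on U
  have hcU : ContinuousOn c U := by
    intro x hx
    apply ContinuousAt.continuousWithinAt
    by_cases hxA : x ∈ A
    · apply ContinuousAt.congr hcuc.continuousAt
      apply Filter.eventuallyEq_of_mem (hAopen.mem_nhds hxA)
      intro y hy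
      simp only [hc]
      rw [if_pos (mem_union_right _ hy)]
    by_cases hxB : x ∈ B
    · apply ContinuousAt.congr hcvc.continuousAt
      apply Filter.eventuallyEq_of_mem (hBopen.mem_nhds hxB)
      intro y hy
      simp only [hc]
      rw [if_neg (fun h => absurd (hBW ▸ mem_inter hy h) (notMem_empty y))]
    -- x ∈ U but not in U ∩ V, so x ∈ Vᶜ
    have hxV : x ∈ Vᶜ := by
      intro h
      have hxUV : x ∈ U ∩ V := ⟨hx, h⟩
      rcases (hABcover ▸ hxUV : x ∈ A ∪ B) with h' | h'
      exacts [hxA h', hxB h']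
    have heq : cu x = cv x := by
      rw [hcu, hcv]
      simp only []
      rw [hφ0 x hxV]
      ring
    have hforc : ∀ y, c y = cu y ∨ c y = cv y := by
      intro y
      simp only [hc]
      by_cases h : y ∈ W
      · left; rw [if_pos h]
      · right; rw [if_neg h]
    apply squeezeCont hcuc hcvc hforc heq
    simp only [hc]
    rw [if_pos (mem_union_left _ hxV)]
  -- d is continuous on V
  have hdU : ContinuousOn d V := by
    intro x hx
    apply ContinuousAt.continuousWithinAt
    by_cases hxA : x ∈ A
    · apply ContinuousAt.congr (show Continuous fun y => cu y + 1 from hcuc.add continuous_const).continuousAt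
      apply Filter.eventuallyEq_of_mem (hAopen.mem_nhds hxA)
      intro y hy
      simp only [hd]
      rw [if_pos (mem_union_right _ hy)]
    by_cases hxB : x ∈ B
    · apply ContinuousAt.congr hcvc.continuousAt
      apply Filter.eventuallyEq_of_mem (hBopen.mem_nhds hxB)
      intro y hy
      simp only [hd]
      rw [if_neg (fun h => absurd (hBW ▸ mem_inter hy h) (notMem_empty y))]
    -- x ∈ V but not in U ∩ V, so x ∈ Uᶜ, hence x ∉ W
    have hxU : x ∈ Uᶜ := by
      intro h
      have hxUV : x ∈ U ∩ V := ⟨h, hx⟩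
      rcases (hABcover ▸ hxUV : x ∈ A ∪ B) with h' | h'
      exacts [hxA h', hxB h']
    have hxW : x ∉ W := by
      intro h
      rcases h with h | h
      · exact h hx
      · exact hxA h
    have heq : (fun y => cu y + 1) x = cv x := by
      rw [hcu, hcv]
      simp only []
      rw [hφ1 x hxU]
      ring
    have hford : ∀ y, d y = (fun y => cu y + 1) y ∨ d y = cv y := by
      intro y
      simp only [hd]
      by_cases h : y ∈ W
      · left; rw [if_pos h]
      · right; rw [if_neg h]
    apply squeezeCont (hcuc.add continuous_const) hcvc hford heq
    simp only [hd]
    rw [if_neg hxW]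
    exact heq.symm
  -- derive the contradiction
  obtain ⟨p, hp⟩ := hAnon
  obtain ⟨q, hq⟩ := hBnon
  have hpU : p ∈ U := hp.1.1
  have hpV : p ∈ V := hp.1.2
  have hqU : q ∈ U := hq.1.1
  have hqV : q ∈ V := hq.1.2
  have hpW : p ∈ W := mem_union_right _ hp
  have hqW : q ∉ W := fun h => absurd (hBW ▸ mem_inter hq h) (notMem_empty q)
  have hcpq : c p = c q := by
    apply intValuedConst hU hcU _ hpU hqU
    intro z _
    exact hcint z
  have hdpq : d p = d q := by
    apply intValuedConst hV hdU _ hpV hqV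
    intro z _
    exact hdint z
  have e1 : c p = (τ p - φ p)/2 := by simp only [hc]; rw [if_pos hpW]
  have e2 : d p = (τ p - φ p)/2 + 1 := by simp only [hd]; rw [if_pos hpW]
  have e3 : c q = (τ q + φ q)/2 := by simp only [hc]; rw [if_neg hqW]
  have e4 : d q = (τ q + φ q)/2 := by simp only [hd]; rw [if_neg hqW]
  rw [e1, e3] at hcpq
  rw [e2, e4] at hdpq
  linarith

lemma mem_compOf {s : Set ℂ} (hs : IsOpen s) {y x : ℂ}
    (hx : x ∈ closure (connectedComponentIn s y)) (hxs : x ∈ s) :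
    x ∈ connectedComponentIn s y := by
  obtain ⟨ε, hε, hball⟩ := Metric.isOpen_iff.mp hs x hxs
  obtain ⟨z, hz1, hz2⟩ := mem_closure_iff.mp hx (ball x ε) isOpen_ball (mem_ball_self hε)
  have hy : y ∈ s := connectedComponentIn_nonempty_iff.mp ⟨z, hz2⟩
  have hpre : IsPreconnected (ball x ε ∪ connectedComponentIn s y) :=
    IsPreconnected.union z hz1 hz2 (convex_ball x ε).isPreconnected
      isPreconnected_connectedComponentIn
  have hsub : ball x ε ∪ connectedComponentIn s y ⊆ s :=
    union_subset hball (connectedComponentIn_subset s y)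
  have h2 := hpre.subset_connectedComponentIn
    (mem_union_right _ (mem_connectedComponentIn hy)) hsub
  exact h2 (mem_union_left _ (mem_ball_self hε))

lemma closure_comp_meets {F : Set ℂ} (hFc : IsClosed F) (hFne : F.Nonempty) {b : ℂ}
    (hb : b ∉ F) : (closure (connectedComponentIn Fᶜ b) ∩ F).Nonempty := by
  by_contra h
  rw [not_nonempty_iff_eq_empty] at h
  have hCo : IsOpen (connectedComponentIn Fᶜ b) := hFc.isOpen_compl.connectedComponentIn
  have hCc : IsClosed (connectedComponentIn Fᶜ b) := by
    rw [← closure_subset_iff_isClosed]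
    intro x hx
    have hxF : x ∉ F := fun hxF => absurd (h ▸ mem_inter hx hxF) (notMem_empty x)
    exact mem_compOf hFc.isOpen_compl hx hxF
  rcases isClopen_iff.mp ⟨hCc, hCo⟩ with h1 | h1
  · exact absurd (h1 ▸ mem_connectedComponentIn hb) (notMem_empty b)
  · obtain ⟨w, hw⟩ := hFne
    exact (connectedComponentIn_subset Fᶜ b) (h1 ▸ (mem_univ w) : w ∈ connectedComponentIn Fᶜ b) hw

lemma compIn_subset_compIn {E S K : Set ℂ} (hES : E ⊆ S) (hK : IsPreconnected K)
    (hKS : K ⊆ S) {x w : ℂ} (hwK : w ∈ K)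
    (hmeet : (closure (connectedComponentIn E x) ∩ K).Nonempty) :
    connectedComponentIn E x ⊆ connectedComponentIn S w := by
  obtain ⟨y, hyc, hyK⟩ := hmeet
  have hDpre : IsPreconnected (connectedComponentIn E x) := isPreconnected_connectedComponentIn
  have hins : IsPreconnected (insert y (connectedComponentIn E x)) :=
    hDpre.subset_closure (subset_insert y _) (insert_subset hyc subset_closure)
  have huni : IsPreconnected (insert y (connectedComponentIn E x) ∪ K) :=
    IsPreconnected.union y (mem_insert y _) hyK hins hK
  have hsub : insert y (connectedComponentIn E x) ∪ K ⊆ S :=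
    union_subset (insert_subset (hKS hyK) ((connectedComponentIn_subset E x).trans hES)) hKS
  have h2 := huni.subset_connectedComponentIn (mem_union_right _ hwK) hsub
  exact fun d hd => h2 (mem_union_left _ (mem_insert_of_mem _ hd))

/-- Let `F` and `G` be disjoint closed connected subsets of the plane, with `a ∈ F` and
`b ∈ G`. Then `O(F,G) := O_F(G) ∩ O_G(F)` (intersection of the component of `Gᶜ`
containing `F` and the component of `Fᶜ` containing `G`) is the unique connected
component of `ℝ² ∖ (F ∪ G)` whose closure meets both `F` and `G`. -/
theorem stmt15 (F G : Set ℂ) (hFc : IsClosed F) (hGc : IsClosed G)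
    (hF : IsConnected F) (hG : IsConnected G) (hFG : Disjoint F G)
    (a : ℂ) (ha : a ∈ F) (b : ℂ) (hb : b ∈ G) :
    (∃ x ∈ (F ∪ G)ᶜ, connectedComponentIn Gᶜ a ∩ connectedComponentIn Fᶜ b =
      connectedComponentIn (F ∪ G)ᶜ x) ∧
    (closure (connectedComponentIn Gᶜ a ∩ connectedComponentIn Fᶜ b) ∩ F).Nonempty ∧
    (closure (connectedComponentIn Gᶜ a ∩ connectedComponentIn Fᶜ b) ∩ G).Nonempty ∧
    (∀ x ∈ (F ∪ G)ᶜ,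
      (closure (connectedComponentIn (F ∪ G)ᶜ x) ∩ F).Nonempty →
      (closure (connectedComponentIn (F ∪ G)ᶜ x) ∩ G).Nonempty →
      connectedComponentIn (F ∪ G)ᶜ x =
        connectedComponentIn Gᶜ a ∩ connectedComponentIn Fᶜ b) := by
  have haG : a ∉ G := disjoint_left.mp hFG ha
  have hbF : b ∉ F := disjoint_right.mp hFG hb
  have hFGc : F ⊆ Gᶜ := fun z hz => disjoint_left.mp hFG hz
  have hGFc : G ⊆ Fᶜ := fun z hz => disjoint_right.mp hFG hz
  set CA := connectedComponentIn Gᶜ a with hCA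
  set CB := connectedComponentIn Fᶜ b with hCB
  have hCAo : IsOpen CA := hGc.isOpen_compl.connectedComponentIn
  have hCBo : IsOpen CB := hFc.isOpen_compl.connectedComponentIn
  have hCApre : IsPreconnected CA := isPreconnected_connectedComponentIn
  have hCBpre : IsPreconnected CB := isPreconnected_connectedComponentIn
  have hCAsub : CA ⊆ Gᶜ := connectedComponentIn_subset _ _
  have hCBsub : CB ⊆ Fᶜ := connectedComponentIn_subset _ _
  have hFsub : F ⊆ CA := hF.isPreconnected.subset_connectedComponentIn ha hFGc
  have hGsub : G ⊆ CB := hG.isPreconnected.subset_connectedComponentIn hb hGFc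
  have hOsub : CA ∩ CB ⊆ (F ∪ G)ᶜ := by
    intro z hz
    rw [mem_compl_iff, mem_union]
    push_neg
    exact ⟨fun h => (hCBsub hz.2) h, fun h => (hCAsub hz.1) h⟩
  have hFGcc : (F ∪ G)ᶜ ⊆ Gᶜ := compl_subset_compl.mpr subset_union_right
  have hFGcF : (F ∪ G)ᶜ ⊆ Fᶜ := compl_subset_compl.mpr subset_union_left
  -- Step 1 : CA ∪ CB = univ
  have huniv : CA ∪ CB = univ := by
    rw [eq_univ_iff_forall]
    intro z
    by_cases hzF : z ∈ F
    · exact mem_union_left _ (hFsub hzF)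
    by_cases hzG : z ∈ G
    · exact mem_union_right _ (hGsub hzG)
    have hzFG : z ∉ F ∪ G := fun h => h.elim hzF hzG
    obtain ⟨y, hyc, hyFG⟩ := closure_comp_meets (hFc.union hGc) ⟨a, mem_union_left _ ha⟩ hzFG
    have hzD : z ∈ connectedComponentIn (F ∪ G)ᶜ z := mem_connectedComponentIn hzFG
    rcases hyFG with hyF | hyG
    · exact mem_union_left _
        (compIn_subset_compIn hFGcc hF.isPreconnected hFGc ha ⟨y, hyc, hyF⟩ hzD)
    · exact mem_union_right _
        (compIn_subset_compIn hFGcF hG.isPreconnected hGFc hb ⟨y, hyc, hyG⟩ hzD)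
  -- Step 2 : CA ∩ CB is nonempty
  have hOne : (CA ∩ CB).Nonempty := by
    obtain ⟨x0, hx0c, hx0F⟩ := closure_comp_meets hFc ⟨a, ha⟩ hbF
    exact mem_closure_iff.mp hx0c CA hCAo (hFsub hx0F)
  -- Step 3 : CA ∩ CB is preconnected
  have hOpre : IsPreconnected (CA ∩ CB) := unicoherence hCAo hCBo hCApre hCBpre huniv
  -- Step 4 : key component identification
  have key : ∀ x, x ∈ (F ∪ G)ᶜ → x ∈ CA ∩ CB →
      connectedComponentIn (F ∪ G)ᶜ x = CA ∩ CB := by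
    intro x hx hxO
    apply Subset.antisymm
    · have hDCA : connectedComponentIn (F ∪ G)ᶜ x ⊆ CA := by
        have hpre : IsPreconnected (connectedComponentIn (F ∪ G)ᶜ x ∪ CA) :=
          IsPreconnected.union x (mem_connectedComponentIn hx) hxO.1
            isPreconnected_connectedComponentIn hCApre
        have hsub : connectedComponentIn (F ∪ G)ᶜ x ∪ CA ⊆ Gᶜ :=
          union_subset ((connectedComponentIn_subset _ _).trans hFGcc) hCAsub
        have h2 := hpre.subset_connectedComponentIn
          (mem_union_right _ (mem_connectedComponentIn haG)) hsub
        exact fun d hd => h2 (mem_union_left _ hd)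
      have hDCB : connectedComponentIn (F ∪ G)ᶜ x ⊆ CB := by
        have hpre : IsPreconnected (connectedComponentIn (F ∪ G)ᶜ x ∪ CB) :=
          IsPreconnected.union x (mem_connectedComponentIn hx) hxO.2
            isPreconnected_connectedComponentIn hCBpre
        have hsub : connectedComponentIn (F ∪ G)ᶜ x ∪ CB ⊆ Fᶜ :=
          union_subset ((connectedComponentIn_subset _ _).trans hFGcF) hCBsub
        have h2 := hpre.subset_connectedComponentIn
          (mem_union_right _ (mem_connectedComponentIn hbF)) hsub
        exact fun d hd => h2 (mem_union_left _ hd)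
      exact subset_inter hDCA hDCB
    · exact hOpre.subset_connectedComponentIn hxO hOsub
  -- Step 5 : closure of O meets F and G
  have hclF : (closure (CA ∩ CB) ∩ F).Nonempty := by
    by_contra hne
    rw [not_nonempty_iff_eq_empty] at hne
    have hsplit : CA ⊆ (CA ∩ CB) ∪ (closure (CA ∩ CB))ᶜ := by
      intro z hzA
      by_cases hz : z ∈ closure (CA ∩ CB)
      · have hzF : z ∉ F := fun hzF => absurd (hne ▸ mem_inter hz hzF) (notMem_empty z)
        have hzCB : z ∈ CB := mem_compOf hFc.isOpen_compl
          ((closure_mono inter_subset_right) hz) hzF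
        exact mem_union_left _ ⟨hzA, hzCB⟩
      · exact mem_union_right _ hz
    have hdisj : CA ∩ ((CA ∩ CB) ∩ (closure (CA ∩ CB))ᶜ) = ∅ := by
      rw [← subset_empty_iff]
      intro z hz
      exact (hz.2.2) (subset_closure hz.2.1)
    rcases isPreconnected_iff_subset_of_disjoint.mp hCApre _ _
        (hCAo.inter hCBo) (isClosed_closure).isOpen_compl hsplit hdisj with hsub | hsub
    · obtain ⟨w, hw⟩ := hF.nonempty
      exact (hCBsub (hsub (hFsub hw)).2) hw
    · obtain ⟨z, hz⟩ := hOne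
      exact (hsub hz.1) (subset_closure hz)
  have hclG : (closure (CA ∩ CB) ∩ G).Nonempty := by
    by_contra hne
    rw [not_nonempty_iff_eq_empty] at hne
    have hsplit : CB ⊆ (CA ∩ CB) ∪ (closure (CA ∩ CB))ᶜ := by
      intro z hzB
      by_cases hz : z ∈ closure (CA ∩ CB)
      · have hzG : z ∉ G := fun hzG => absurd (hne ▸ mem_inter hz hzG) (notMem_empty z)
        have hzCA : z ∈ CA := mem_compOf hGc.isOpen_compl
          ((closure_mono inter_subset_left) hz) hzG
        exact mem_union_left _ ⟨hzCA, hzB⟩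
      · exact mem_union_right _ hz
    have hdisj : CB ∩ ((CA ∩ CB) ∩ (closure (CA ∩ CB))ᶜ) = ∅ := by
      rw [← subset_empty_iff]
      intro z hz
      exact (hz.2.2) (subset_closure hz.2.1)
    rcases isPreconnected_iff_subset_of_disjoint.mp hCBpre _ _
        (hCAo.inter hCBo) (isClosed_closure).isOpen_compl hsplit hdisj with hsub | hsub
    · obtain ⟨w, hw⟩ := hG.nonempty
      exact (hCAsub (hsub (hGsub hw)).1) hw
    · obtain ⟨z, hz⟩ := hOne
      exact (hsub hz.2) (subset_closure hz)
  obtain ⟨x₀, hx₀⟩ := hOne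
  refine ⟨⟨x₀, hOsub hx₀, (key x₀ (hOsub hx₀) hx₀).symm⟩, hclF, hclG, ?_⟩
  -- Step 6 : uniqueness
  intro x hx h1 h2
  have hDCA : connectedComponentIn (F ∪ G)ᶜ x ⊆ CA :=
    compIn_subset_compIn hFGcc hF.isPreconnected hFGc ha h1
  have hDCB : connectedComponentIn (F ∪ G)ᶜ x ⊆ CB :=
    compIn_subset_compIn hFGcF hG.isPreconnected hGFc hb h2
  have hxD : x ∈ connectedComponentIn (F ∪ G)ᶜ x := mem_connectedComponentIn hx
  exact key x hx ⟨hDCA hxD, hDCB hxD⟩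

end
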